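/- Let κ be a measurable cardinal and let δ ≤ λ be ordinals with κ = cf(δ) ≤ δ < λ. Then the linear order δ (as an initial segment, hence suborder, of the linear order λ) is nicely embedded in λ. (The order-theoretic step of Theorem 2.8.) -/

import Mathlib

open Filter Cardinal

universe u

/-- `I` is nicely embedded in `J` (along the inclusion `e : I ↪o J`): there are a nonempty
set `S` and an ultrafilter `D` on `S` together with an order embedding of `J` into the
ultrapower `I^S/D` whose restriction to `I` is the canonical diagonal embedding. -/
def NicelyEmbedded {I : Type u} {J : Type u} [LinearOrder I] [LinearOrder J]
    (e : I ↪o J) : Prop :=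
  ∃ (S : Type u) (_ : Nonempty S) (D : Ultrafilter S)
    (g : J ↪o Filter.Germ (D : Filter S) I),
    ∀ t : I, g (e t) = (↑t : Filter.Germ (D : Filter S) I)

/-- `κ` is a measurable cardinal: it is uncountable and carries a `κ`-complete
nonprincipal ultrafilter on `κ`. -/
def IsMeasurableCardinal (κ : Cardinal.{u}) : Prop :=
  ℵ₀ < κ ∧ ∃ D : Ultrafilter κ.ord.ToType,
    (∀ x, D ≠ pure x) ∧ CardinalInterFilter (D : Filter κ.ord.ToType) κ

/-- The ordinal rank of an element of `o.ToType`. -/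
noncomputable def ordRank {o : Ordinal.{u}} (x : o.ToType) : Ordinal.{u} :=
  @Ordinal.typein o.ToType (· < ·) isWellOrder_lt x

/-- The order-theoretic step of Theorem 2.8: if `κ` is measurable and
`κ = cf(δ) ≤ δ < λ`, then the linear order `δ`, viewed as the initial segment
`{x ∈ λ : rank x < δ}` of the linear order `λ`, is nicely embedded in `λ`. -/
theorem initialSegment_nicelyEmbedded (κ : Cardinal.{u}) (δ lam : Ordinal.{u})
    (hκ : IsMeasurableCardinal κ) (hcof : δ.cof = κ) (hδ : κ.ord ≤ δ)
    (hlt : δ < lam) :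
    NicelyEmbedded
      (OrderEmbedding.subtype (fun x : lam.ToType => ordRank x < δ)) := by
  classical
  obtain ⟨hκ0, -⟩ := hκ
  have hδlim : Order.IsSuccLimit δ := Ordinal.aleph0_le_cof.mp (by rw [hcof]; exact hκ0.le)
  set L := lam.ToType with hL
  set I := {x : L // ordRank x < δ} with hIdef
  -- basic facts about ranks
  have hrank_iff : ∀ x y : L, ordRank x < ordRank y ↔ x < y := fun x y =>
    @Ordinal.typein_lt_typein L (· < ·) isWellOrder_lt x y
  have hsurj : ∀ o < lam, ∃ x : L, ordRank x = o := by
    intro o ho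
    exact @Ordinal.typein_surj L (· < ·) isWellOrder_lt o
      (by rwa [Ordinal.type_toType])
  -- I is nonempty
  have hIne : Nonempty I := by
    obtain ⟨x, hx⟩ := hsurj 0 (lt_of_le_of_lt (zero_le (a := δ)) hlt)
    exact ⟨⟨x, by rw [hx]; exact hδlim.pos⟩⟩
  -- I has no maximal element
  have hnomax : ∀ a : I, ∃ b : I, a < b := by
    intro a
    have h1 : Order.succ (ordRank a.val) < δ := hδlim.succ_lt a.2
    obtain ⟨b, hb⟩ := hsurj (Order.succ (ordRank a.val)) (h1.trans hlt)
    refine ⟨⟨b, by rw [hb]; exact h1⟩, ?_⟩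
    have : ordRank a.val < ordRank b := by rw [hb]; exact Order.lt_succ _
    exact Subtype.mk_lt_mk.mpr ((hrank_iff _ _).mp this)
  haveI : NoMaxOrder I := ⟨hnomax⟩
  -- the index set and the generating family
  set S := (L → I) with hS
  haveI : Nonempty S := ⟨fun _ => Classical.choice hIne⟩
  let C : Finset L × Finset I → Set S := fun XT =>
    {p | (∀ x ∈ XT.1, ∀ y ∈ XT.1, x < y → p x < p y) ∧ ∀ x : L, ∀ t ∈ XT.2, t < p x}
  -- each C is nonempty
  have hCne : ∀ i, (C i).Nonempty := by
    rintro ⟨X, T⟩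
    obtain ⟨m, hm⟩ := T.exists_le
    -- a strictly increasing sequence in I starting above m
    let u : ℕ → I := fun n => Nat.rec (Classical.choose (exists_gt m))
      (fun _ prev => Classical.choose (exists_gt prev)) n
    have hu0 : m < u 0 := Classical.choose_spec (exists_gt m)
    have husucc : ∀ n, u n < u (n + 1) := fun n => Classical.choose_spec (exists_gt (u n))
    have humono : StrictMono u := strictMono_nat_of_lt_succ husucc
    refine ⟨fun x => u ((X.filter (· < x)).card), ?_, ?_⟩
    · intro x hx y hy hxy
      apply humono
      apply Finset.card_lt_card
      constructor
      · intro z hz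
        simp only [Finset.mem_filter] at hz ⊢
        exact ⟨hz.1, hz.2.trans hxy⟩
      · intro hsub
        have : x ∈ X.filter (· < y) := Finset.mem_filter.mpr ⟨hx, hxy⟩
        have := hsub this
        simp only [Finset.mem_filter] at this
        exact absurd this.2 (lt_irrefl x)
    · intro x t ht
      calc t ≤ m := hm t ht
        _ < u 0 := hu0
        _ ≤ u _ := humono.monotone (Nat.zero_le _)
  -- the filter generated by the C's is proper
  have hdir : Directed (· ≥ ·) (fun i => (𝓟 (C i) : Filter S)) := by
    rintro ⟨X, T⟩ ⟨X', T'⟩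
    refine ⟨(X ∪ X', T ∪ T'), principal_mono.mpr ?_, principal_mono.mpr ?_⟩
    · rintro p ⟨h1, h2⟩
      exact ⟨fun x hx y hy => h1 x (Finset.mem_union_left _ hx) y (Finset.mem_union_left _ hy),
        fun x t ht => h2 x t (Finset.mem_union_left _ ht)⟩
    · rintro p ⟨h1, h2⟩
      exact ⟨fun x hx y hy => h1 x (Finset.mem_union_right _ hx) y (Finset.mem_union_right _ hy),
        fun x t ht => h2 x t (Finset.mem_union_right _ ht)⟩
  have hFne : (⨅ i, (𝓟 (C i) : Filter S)).NeBot :=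
    iInf_neBot_of_directed hdir (fun i => principal_neBot_iff.mpr (hCne i))
  let D : Ultrafilter S := @Ultrafilter.of S _ hFne
  have hDle : (D : Filter S) ≤ ⨅ i, (𝓟 (C i) : Filter S) := Ultrafilter.of_le _
  have hDC : ∀ i, C i ∈ D := fun i =>
    hDle (mem_iInf_of_mem i (mem_principal_self _))
  -- the two kinds of membership facts
  have hA : ∀ x y : L, x < y → {p : S | p x < p y} ∈ D := by
    intro x y hxy
    refine mem_of_superset (hDC ({x, y}, ∅)) ?_
    rintro p ⟨h1, -⟩
    exact h1 x (by simp) y (by simp) hxy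
  have hB : ∀ (x : L) (t : I), {p : S | t < p x} ∈ D := by
    intro x t
    refine mem_of_superset (hDC (∅, {t})) ?_
    rintro p ⟨-, h2⟩
    exact h2 x t (by simp)
  -- the embedding
  let G : L → Germ (D : Filter S) I := fun x =>
    if h : ordRank x < δ then (↑(⟨x, h⟩ : I) : Germ (D : Filter S) I)
    else ((fun p : S => p x) : Germ (D : Filter S) I)
  have hGmono : StrictMono G := by
    intro x y hxy
    by_cases hx : ordRank x < δ <;> by_cases hy : ordRank y < δ
    · rw [show G x = _ from dif_pos hx, show G y = _ from dif_pos hy]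
      exact Germ.const_lt (Subtype.mk_lt_mk.mpr hxy)
    · rw [show G x = _ from dif_pos hx, show G y = _ from dif_neg hy]
      have : (↑(⟨x, hx⟩ : I) : Germ (D : Filter S) I)
          = ((fun _ : S => (⟨x, hx⟩ : I)) : Germ (D : Filter S) I) := rfl
      rw [this]
      exact Germ.coe_lt.mpr (hB y ⟨x, hx⟩)
    · exact absurd (((hrank_iff x y).mpr hxy).trans hy) hx
    · rw [show G x = _ from dif_neg hx, show G y = _ from dif_neg hy]
      exact Germ.coe_lt.mpr (hA x y hxy)
  refine ⟨S, ‹Nonempty S›, D, OrderEmbedding.ofStrictMono G hGmono, ?_⟩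
  intro t
  show G t.val = _
  rw [show G t.val = _ from dif_pos t.2]
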